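/- arXiv:2207.02913 — 5 statements merged into one kernel-verified Lean document; each statement's English description precedes it below -/
import Mathlib

section
/- The set U'_{2g}(F_ℓ) of block matrices [[A, μ⁻¹AS],[0, μ(Aᵗ)⁻¹]], with A upper triangular g×g over F_ℓ having all diagonal entries equal to some λ ∈ F_ℓ^×, μ = λ², and S symmetric g×g over F_ℓ, is a normal subgroup of B_{2g}(F_ℓ). -/
open Matrix Polynomial

noncomputable section

/-- The standard symplectic form matrix `J = [[0, I],[-I, 0]]`. -/
def Jmat (ℓ g : ℕ) : Matrix (Fin g ⊕ Fin g) (Fin g ⊕ Fin g) (ZMod ℓ) :=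
  fromBlocks 0 1 (-1) 0

/-- The general symplectic group `GSp_{2g}(F_ℓ)` as a set of matrices:
invertible `M` with `Mᵀ J M = μ J` for some unit `μ` (the multiplicator). -/
def GSpSet (ℓ g : ℕ) : Set (Matrix (Fin g ⊕ Fin g) (Fin g ⊕ Fin g) (ZMod ℓ)) :=
  {M | IsUnit M ∧ ∃ μ : (ZMod ℓ)ˣ, Mᵀ * Jmat ℓ g * M = (μ : ZMod ℓ) • Jmat ℓ g}

/-- `B_{2g}(F_ℓ)`: block matrices `[[A, μ⁻¹AS],[0, μ(Aᵀ)⁻¹]]` with `A` invertible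
upper triangular, `μ ∈ F_ℓˣ` and `S` symmetric. -/
def BSet (ℓ g : ℕ) : Set (Matrix (Fin g ⊕ Fin g) (Fin g ⊕ Fin g) (ZMod ℓ)) :=
  {M | ∃ (A S : Matrix (Fin g) (Fin g) (ZMod ℓ)) (μ : (ZMod ℓ)ˣ),
    A.BlockTriangular id ∧ IsUnit A ∧ S.IsSymm ∧
    M = fromBlocks A (((μ : ZMod ℓ))⁻¹ • (A * S)) 0 ((μ : ZMod ℓ) • (Aᵀ)⁻¹)}

/-- `U_{2g}(F_ℓ)`: block matrices `[[A, AS],[0, (Aᵀ)⁻¹]]` with `A` unipotent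
upper triangular and `S` symmetric. -/
def USet (ℓ g : ℕ) : Set (Matrix (Fin g ⊕ Fin g) (Fin g ⊕ Fin g) (ZMod ℓ)) :=
  {M | ∃ (A S : Matrix (Fin g) (Fin g) (ZMod ℓ)),
    A.BlockTriangular id ∧ (∀ i, A i i = 1) ∧ S.IsSymm ∧
    M = fromBlocks A (A * S) 0 ((Aᵀ)⁻¹)}

/-- `U'_{2g}(F_ℓ)`: block matrices `[[A, μ⁻¹AS],[0, μ(Aᵀ)⁻¹]]` with `A` upper
triangular of constant diagonal `λ ∈ F_ℓˣ`, `μ = λ²`, and `S` symmetric. -/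
def U'Set (ℓ g : ℕ) : Set (Matrix (Fin g ⊕ Fin g) (Fin g ⊕ Fin g) (ZMod ℓ)) :=
  {M | ∃ (A S : Matrix (Fin g) (Fin g) (ZMod ℓ)) (lam : (ZMod ℓ)ˣ),
    A.BlockTriangular id ∧ (∀ i, A i i = (lam : ZMod ℓ)) ∧ S.IsSymm ∧
    M = fromBlocks A ((((lam : ZMod ℓ) ^ 2))⁻¹ • (A * S)) 0
      (((lam : ZMod ℓ) ^ 2) • (Aᵀ)⁻¹)}

/-- `T_{2g}(F_ℓ)`: block diagonal matrices `diag(A, μ(Aᵀ)⁻¹)` with `A` an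
invertible diagonal matrix and `μ ∈ F_ℓˣ`. -/
def TSet (ℓ g : ℕ) : Set (Matrix (Fin g ⊕ Fin g) (Fin g ⊕ Fin g) (ZMod ℓ)) :=
  {M | ∃ (d : Fin g → (ZMod ℓ)ˣ) (μ : (ZMod ℓ)ˣ),
    M = fromBlocks (diagonal fun i => (d i : ZMod ℓ)) 0 0
      ((μ : ZMod ℓ) • diagonal fun i => (((d i)⁻¹ : (ZMod ℓ)ˣ) : ZMod ℓ))}

namespace Stmt2Aux

variable {ℓ g : ℕ} [Fact ℓ.Prime]

lemma diag_mul {A B : Matrix (Fin g) (Fin g) (ZMod ℓ)} (hA : A.BlockTriangular id)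
    (hB : B.BlockTriangular id) (i : Fin g) : (A * B) i i = A i i * B i i := by
  rw [Matrix.mul_apply, Finset.sum_eq_single i]
  · intro b _ hb
    rcases lt_or_gt_of_ne hb with h | h
    · rw [hA (show (id b : Fin g) < id i from h), zero_mul]
    · rw [hB (show (id i : Fin g) < id b from h), mul_zero]
  · simp

lemma diag_ne_zero {A : Matrix (Fin g) (Fin g) (ZMod ℓ)} (hA : A.BlockTriangular id)
    (hu : IsUnit A) (i : Fin g) : A i i ≠ 0 := by
  have hd : IsUnit A.det := (Matrix.isUnit_iff_isUnit_det A).mp hu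
  rw [Matrix.det_of_upperTriangular hA] at hd
  have := hd.ne_zero
  rw [Finset.prod_ne_zero_iff] at this
  exact this i (Finset.mem_univ i)

lemma diag_inv {A : Matrix (Fin g) (Fin g) (ZMod ℓ)} (hA : A.BlockTriangular id)
    (hu : IsUnit A) (i : Fin g) : A⁻¹ i i = (A i i)⁻¹ := by
  haveI := hu.invertible
  have hinv : (A⁻¹).BlockTriangular id := blockTriangular_inv_of_blockTriangular hA
  have h1 : (A * A⁻¹) i i = 1 := by
    rw [Matrix.mul_nonsing_inv _ ((Matrix.isUnit_iff_isUnit_det A).mp hu)]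
    simp [Matrix.one_apply]
  rw [diag_mul hA hinv] at h1
  field_simp [diag_ne_zero hA hu i] at h1 ⊢
  linear_combination h1

lemma isUnit_inv {A : Matrix (Fin g) (Fin g) (ZMod ℓ)} (hu : IsUnit A) : IsUnit A⁻¹ := by
  have hd : IsUnit A.det := (Matrix.isUnit_iff_isUnit_det A).mp hu
  exact ⟨⟨A⁻¹, A, Matrix.nonsing_inv_mul A hd, Matrix.mul_nonsing_inv A hd⟩, rfl⟩

lemma isUnit_of_diag {A : Matrix (Fin g) (Fin g) (ZMod ℓ)} (hA : A.BlockTriangular id)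
    (lam : (ZMod ℓ)ˣ) (hd : ∀ i, A i i = (lam : ZMod ℓ)) : IsUnit A := by
  rw [Matrix.isUnit_iff_isUnit_det, Matrix.det_of_upperTriangular hA,
    Finset.prod_congr rfl fun i _ => hd i, Finset.prod_const]
  exact lam.isUnit.pow _

lemma symm_conj {S B : Matrix (Fin g) (Fin g) (ZMod ℓ)} (hS : S.IsSymm) :
    (B * S * Bᵀ).IsSymm := by
  unfold Matrix.IsSymm at *
  rw [Matrix.transpose_mul, Matrix.transpose_mul, Matrix.transpose_transpose, hS,
    Matrix.mul_assoc]

lemma Bmul (A₁ S₁ A₂ S₂ : Matrix (Fin g) (Fin g) (ZMod ℓ)) (a b : ZMod ℓ)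
    (ha : a ≠ 0) (hb : b ≠ 0) (h₂ : IsUnit A₂) :
    fromBlocks A₁ (a⁻¹ • (A₁ * S₁)) 0 (a • (A₁ᵀ)⁻¹) *
      fromBlocks A₂ (b⁻¹ • (A₂ * S₂)) 0 (b • (A₂ᵀ)⁻¹) =
    fromBlocks (A₁ * A₂)
      ((a * b)⁻¹ • ((A₁ * A₂) * (a • S₂ + (b ^ 2) • (A₂⁻¹ * S₁ * (A₂⁻¹)ᵀ)))) 0
      ((a * b) • ((A₁ * A₂)ᵀ)⁻¹) := by
  have hd₂ : IsUnit A₂.det := (Matrix.isUnit_iff_isUnit_det A₂).mp h₂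
  have hcan : A₂ * A₂⁻¹ = 1 := Matrix.mul_nonsing_inv A₂ hd₂
  rw [Matrix.fromBlocks_multiply, Matrix.fromBlocks_inj]
  refine ⟨by rw [Matrix.mul_zero, add_zero], ?_,
    by rw [Matrix.zero_mul, Matrix.mul_zero, add_zero], ?_⟩
  · have e1 : A₁ * A₂ * (A₂⁻¹ * S₁ * (A₂⁻¹)ᵀ) = A₁ * S₁ * (A₂ᵀ)⁻¹ := by
      rw [Matrix.transpose_nonsing_inv, Matrix.mul_assoc A₁ A₂, ← Matrix.mul_assoc A₂,
        ← Matrix.mul_assoc A₂, hcan, Matrix.one_mul, ← Matrix.mul_assoc]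
    simp only [Matrix.mul_add, Matrix.mul_smul, Matrix.smul_mul, smul_smul]
    rw [e1, Matrix.mul_assoc A₁ A₂ S₂]
    match_scalars <;> field_simp <;> ring
  · rw [Matrix.zero_mul, zero_add, Matrix.transpose_mul, Matrix.mul_inv_rev, Matrix.smul_mul,
      Matrix.mul_smul, smul_smul]

lemma Binv (A S : Matrix (Fin g) (Fin g) (ZMod ℓ)) (a : ZMod ℓ) (ha : a ≠ 0)
    (hu : IsUnit A) :
    (fromBlocks A (a⁻¹ • (A * S)) 0 (a • (Aᵀ)⁻¹))⁻¹ =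
    fromBlocks A⁻¹
      ((a⁻¹)⁻¹ • (A⁻¹ * ((-(a⁻¹ ^ 3)) • (A * S * Aᵀ)))) 0
      (a⁻¹ • ((A⁻¹)ᵀ)⁻¹) := by
  have hd : IsUnit A.det := (Matrix.isUnit_iff_isUnit_det A).mp hu
  have hdT : IsUnit Aᵀ.det := by rwa [Matrix.det_transpose]
  have hcan : A * A⁻¹ = 1 := Matrix.mul_nonsing_inv A hd
  have hcanT : (Aᵀ)⁻¹ * Aᵀ = 1 := Matrix.nonsing_inv_mul Aᵀ hdT
  rw [inv_inv, Matrix.transpose_nonsing_inv, Matrix.nonsing_inv_nonsing_inv Aᵀ hdT]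
  apply Matrix.inv_eq_right_inv
  rw [Matrix.fromBlocks_multiply, ← Matrix.fromBlocks_one, Matrix.fromBlocks_inj]
  refine ⟨by rw [Matrix.mul_zero, add_zero, hcan], ?_,
    by rw [Matrix.zero_mul, Matrix.mul_zero, add_zero], ?_⟩
  · rw [Matrix.mul_smul, ← Matrix.mul_assoc A A⁻¹, hcan, Matrix.one_mul,
      Matrix.smul_mul, Matrix.mul_smul, smul_smul, smul_smul]
    match_scalars
    field_simp
    ring
  · rw [Matrix.zero_mul, zero_add, Matrix.smul_mul, Matrix.mul_smul, smul_smul,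
      mul_inv_cancel₀ ha, one_smul, hcanT]

end Stmt2Aux

open Stmt2Aux in
/-- `U'_{2g}(F_ℓ)` is a normal subgroup of `B_{2g}(F_ℓ)`: it is contained in
`B_{2g}(F_ℓ)`, contains the identity, is closed under multiplication and
inverses, and is stable under conjugation by elements of `B_{2g}(F_ℓ)`. -/
theorem stmt2 (ℓ g : ℕ) [Fact ℓ.Prime] (hg : 1 ≤ g) :
    U'Set ℓ g ⊆ BSet ℓ g ∧
    (1 : Matrix (Fin g ⊕ Fin g) (Fin g ⊕ Fin g) (ZMod ℓ)) ∈ U'Set ℓ g ∧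
    (∀ M ∈ U'Set ℓ g, ∀ N ∈ U'Set ℓ g, M * N ∈ U'Set ℓ g) ∧
    (∀ M ∈ U'Set ℓ g, M⁻¹ ∈ U'Set ℓ g) ∧
    (∀ B ∈ BSet ℓ g, ∀ M ∈ U'Set ℓ g, B * M * B⁻¹ ∈ U'Set ℓ g) := by
  refine ⟨?_, ?_, ?_, ?_, ?_⟩
  · -- U' ⊆ B
    rintro M ⟨A, S, lam, ht, hd, hS, rfl⟩
    refine ⟨A, S, lam ^ 2, ht, isUnit_of_diag ht lam hd, hS, ?_⟩
    rw [Units.val_pow_eq_pow_val]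
  · -- 1 ∈ U'
    refine ⟨1, 0, 1, Matrix.blockTriangular_one, fun i => by rw [Matrix.one_apply_eq, Units.val_one],
      by unfold Matrix.IsSymm; rw [Matrix.transpose_zero], ?_⟩
    have h1 : (1 : Matrix (Fin g) (Fin g) (ZMod ℓ))⁻¹ = 1 :=
      Matrix.inv_eq_right_inv (Matrix.one_mul 1)
    rw [Units.val_one, one_pow, inv_one, Matrix.mul_zero, smul_zero, Matrix.transpose_one,
      h1, one_smul, Matrix.fromBlocks_one]
  · -- closed under multiplication
    rintro M ⟨A₁, S₁, lam₁, ht₁, hd₁, hS₁, rfl⟩ N ⟨A₂, S₂, lam₂, ht₂, hd₂, hS₂, rfl⟩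
    have hu₂ : IsUnit A₂ := isUnit_of_diag ht₂ lam₂ hd₂
    have ha : ((lam₁ : ZMod ℓ) ^ 2) ≠ 0 := pow_ne_zero _ lam₁.ne_zero
    have hb : ((lam₂ : ZMod ℓ) ^ 2) ≠ 0 := pow_ne_zero _ lam₂.ne_zero
    refine ⟨A₁ * A₂,
      ((lam₁ : ZMod ℓ) ^ 2) • S₂ + (((lam₂ : ZMod ℓ) ^ 2) ^ 2) • (A₂⁻¹ * S₁ * (A₂⁻¹)ᵀ),
      lam₁ * lam₂, ht₁.mul ht₂, ?_, ?_, ?_⟩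
    · intro i
      rw [diag_mul ht₁ ht₂, hd₁, hd₂, Units.val_mul]
    · exact (hS₂.smul _).add ((symm_conj hS₁).smul _)
    · rw [show (((lam₁ * lam₂ : (ZMod ℓ)ˣ) : ZMod ℓ)) ^ 2
          = ((lam₁ : ZMod ℓ) ^ 2) * ((lam₂ : ZMod ℓ) ^ 2) from by push_cast; ring]
      exact Bmul A₁ S₁ A₂ S₂ _ _ ha hb hu₂
  · -- closed under inverses
    rintro M ⟨A, S, lam, ht, hd, hS, rfl⟩
    have hu : IsUnit A := isUnit_of_diag ht lam hd
    haveI := hu.invertible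
    have ha : ((lam : ZMod ℓ) ^ 2) ≠ 0 := pow_ne_zero _ lam.ne_zero
    refine ⟨A⁻¹, (-(((lam : ZMod ℓ) ^ 2)⁻¹ ^ 3)) • (A * S * Aᵀ), lam⁻¹,
      Matrix.blockTriangular_inv_of_blockTriangular ht, ?_, (symm_conj hS).smul _, ?_⟩
    · intro i
      rw [diag_inv ht hu, hd, Units.val_inv_eq_inv_val]
    · rw [show (((lam⁻¹ : (ZMod ℓ)ˣ) : ZMod ℓ)) ^ 2 = ((lam : ZMod ℓ) ^ 2)⁻¹ from by
        rw [Units.val_inv_eq_inv_val, inv_pow]]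
      exact Binv A S _ ha hu
  · -- stable under conjugation
    rintro B ⟨A₁, S₁, μ, ht₁, hu₁, hS₁, rfl⟩ M ⟨A₂, S₂, lam, ht₂, hd₂, hS₂, rfl⟩
    have hu₂ : IsUnit A₂ := isUnit_of_diag ht₂ lam hd₂
    haveI := hu₁.invertible
    have ha : (μ : ZMod ℓ) ≠ 0 := μ.ne_zero
    have hb : ((lam : ZMod ℓ) ^ 2) ≠ 0 := pow_ne_zero _ lam.ne_zero
    have hainv : ((μ : ZMod ℓ))⁻¹ ≠ 0 := inv_ne_zero ha
    set T : Matrix (Fin g) (Fin g) (ZMod ℓ) :=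
      (-(((μ : ZMod ℓ))⁻¹ ^ 3)) • (A₁ * S₁ * A₁ᵀ) with hT
    set S₃ : Matrix (Fin g) (Fin g) (ZMod ℓ) :=
      (μ : ZMod ℓ) • S₂ + (((lam : ZMod ℓ) ^ 2) ^ 2) • (A₂⁻¹ * S₁ * (A₂⁻¹)ᵀ) with hS₃
    have ht₁' : (A₁⁻¹).BlockTriangular id :=
      Matrix.blockTriangular_inv_of_blockTriangular ht₁
    refine ⟨A₁ * A₂ * A₁⁻¹,
      ((μ : ZMod ℓ) * ((lam : ZMod ℓ) ^ 2)) • T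
        + (((μ : ZMod ℓ)⁻¹) ^ 2) • ((A₁⁻¹)⁻¹ * S₃ * ((A₁⁻¹)⁻¹)ᵀ),
      lam, (ht₁.mul ht₂).mul ht₁', ?_, ?_, ?_⟩
    · intro i
      rw [diag_mul (ht₁.mul ht₂) ht₁', diag_mul ht₁ ht₂, hd₂, diag_inv ht₁ hu₁,
        mul_comm (A₁ i i), mul_assoc, mul_inv_cancel₀ (diag_ne_zero ht₁ hu₁ i), mul_one]
    · refine (((symm_conj hS₁).smul _).smul _).add ((symm_conj ?_).smul _)
      exact (hS₂.smul _).add ((symm_conj hS₁).smul _)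
    · rw [Binv A₁ S₁ _ ha hu₁, Bmul A₁ S₁ A₂ S₂ _ _ ha hb hu₂,
        Bmul (A₁ * A₂) S₃ A₁⁻¹ T _ _ (mul_ne_zero ha hb) hainv (isUnit_inv hu₁)]
      rw [show (μ : ZMod ℓ) * ((lam : ZMod ℓ) ^ 2) * ((μ : ZMod ℓ))⁻¹
          = ((lam : ZMod ℓ) ^ 2) from by field_simp]
end
end

section
/- For a prime ℓ with ℓ ∤ 2g and any integer t, the set C^{ss}(ℓ,t) of semisimple matrices M in GSp_{2g}(F_ℓ) having all eigenvalues in F_ℓ^× and trace equal to -t mod ℓ is nonempty. -/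
open Matrix Polynomial

noncomputable section

/-- `C^{ss}(ℓ,t)`: semisimple elements of `GSp_{2g}(F_ℓ)` (squarefree minimal
polynomial, equivalently distinct roots in the algebraic closure) with all
eigenvalues in `F_ℓˣ` (the characteristic polynomial splits over `F_ℓ` with
nonzero roots) and trace `-t mod ℓ`. -/
def CssSet (ℓ g : ℕ) [Fact ℓ.Prime] (t : ℤ) :
    Set (Matrix (Fin g ⊕ Fin g) (Fin g ⊕ Fin g) (ZMod ℓ)) :=
  {M | M ∈ GSpSet ℓ g ∧ Squarefree (minpoly (ZMod ℓ) M) ∧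
    (Matrix.charpoly M).Splits ∧
    (∀ x ∈ (Matrix.charpoly M).roots, x ≠ 0) ∧
    Matrix.trace M = -(t : ZMod ℓ)}

/-- For a prime `ℓ ∤ 2g` and any integer `t`, the set `C^{ss}(ℓ,t)` is
nonempty. -/
theorem stmt8 (ℓ g : ℕ) [Fact ℓ.Prime] (hg : 1 ≤ g) (h2g : ¬ ℓ ∣ 2 * g)
    (t : ℤ) : (CssSet ℓ g t).Nonempty := by
  have hp : ℓ.Prime := Fact.out
  have hℓg : ¬ ℓ ∣ g := fun h => h2g (h.mul_left 2)
  have hℓ2 : ℓ ≠ 2 := by rintro rfl; exact h2g ⟨g, rfl⟩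
  have hg0 : (g : ZMod ℓ) ≠ 0 := by
    rw [Ne, ZMod.natCast_eq_zero_iff]; exact hℓg
  have h2 : (2 : ZMod ℓ) ≠ 0 := by
    have : ¬ ℓ ∣ 2 := fun h => hℓ2 ((Nat.prime_dvd_prime_iff_eq hp Nat.prime_two).mp h)
    have h2' : ((2 : ℕ) : ZMod ℓ) ≠ 0 := by
      rw [Ne, ZMod.natCast_eq_zero_iff]; exact this
    simpa using h2'
  set s : ZMod ℓ := -(t : ZMod ℓ) * (g : ZMod ℓ)⁻¹ with hs
  set c : ZMod ℓ := if s = 1 then -1 else 1 with hc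
  set d : ZMod ℓ := s - c with hd
  have hc0 : c ≠ 0 := by
    rw [hc]; split
    · exact neg_ne_zero.mpr one_ne_zero
    · exact one_ne_zero
  have hd0 : d ≠ 0 := by
    rw [hd, hc]; split_ifs with h
    · rw [h]; simpa [sub_neg_eq_add, one_add_one_eq_two] using h2
    · exact sub_ne_zero.mpr h
  have hsum : c + d = s := by rw [hd]; ring
  set v : Fin g ⊕ Fin g → ZMod ℓ := Sum.elim (fun _ => c) (fun _ => d) with hv
  have hv0 : ∀ i, v i ≠ 0 := by rintro (i | i) <;> simpa [hv] using by assumption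
  refine ⟨diagonal v, ?_, ?_, ?_, ?_, ?_⟩
  · -- GSpSet
    constructor
    · rw [Matrix.isUnit_iff_isUnit_det, det_diagonal]
      exact (Finset.prod_ne_zero_iff.mpr fun i _ => hv0 i).isUnit
    · refine ⟨(Ne.isUnit (mul_ne_zero hc0 hd0)).unit, ?_⟩
      rw [IsUnit.unit_spec, diagonal_transpose]
      ext i j
      rw [Matrix.mul_diagonal, Matrix.diagonal_mul]
      rcases i with i | i <;> rcases j with j | j <;>
        simp only [Matrix.smul_apply, Jmat, fromBlocks_apply₁₁, fromBlocks_apply₁₂,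
          fromBlocks_apply₂₁, fromBlocks_apply₂₂, hv, Sum.elim_inl, Sum.elim_inr,
          Matrix.zero_apply, Matrix.one_apply, Matrix.neg_apply, smul_eq_mul] <;>
        first
        | (split_ifs <;> ring)
        | ring
  · -- squarefree minpoly
    have halg : ∀ a : ZMod ℓ,
        algebraMap (ZMod ℓ) (Matrix (Fin g ⊕ Fin g) (Fin g ⊕ Fin g) (ZMod ℓ)) a =
          diagonal fun _ => a := by
      intro a
      ext i j
      rw [Matrix.algebraMap_matrix_apply]
      by_cases h : i = j <;> simp [h, diagonal_apply]
    by_cases hcd : c = d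
    · have haev : (aeval (diagonal v)) (X - C c) = 0 := by
        rw [map_sub, aeval_X, aeval_C, halg, diagonal_sub]
        ext i j
        rcases i with i | i <;> rcases j with j | j <;>
          simp [diagonal_apply, hv, hcd, Pi.sub_apply, sub_self, ite_self]
      exact (Polynomial.irreducible_X_sub_C c).squarefree.squarefree_of_dvd
        (minpoly.dvd _ _ haev)
    · have haev : (aeval (diagonal v)) ((X - C c) * (X - C d)) = 0 := by
        rw [_root_.map_mul, map_sub, map_sub, aeval_X, aeval_C, aeval_C, halg, halg,
          diagonal_sub, diagonal_sub, diagonal_mul_diagonal]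
        ext i j
        rcases i with i | i <;> rcases j with j | j <;>
          simp [diagonal_apply, hv, Pi.sub_apply, Pi.mul_apply, sub_self, ite_self]
      have hsq : Squarefree ((X - C c) * (X - C d)) := by
        refine (Polynomial.separable_X_sub_C.mul Polynomial.separable_X_sub_C ?_).squarefree
        exact Polynomial.isCoprime_X_sub_C_of_isUnit_sub (sub_ne_zero.mpr hcd).isUnit
      exact hsq.squarefree_of_dvd (minpoly.dvd _ _ haev)
  · -- splits
    have hcp : (diagonal v).charpoly = ∏ i, (X - C (v i)) := by
      rw [Matrix.charpoly, Matrix.charmatrix]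
      have : (C : ZMod ℓ →+* (ZMod ℓ)[X]).mapMatrix (diagonal v) =
          diagonal fun i => C (v i) := by
        rw [RingHom.mapMatrix_apply]
        exact diagonal_map (map_zero C)
      rw [this]
      have hsc : (Matrix.scalar (Fin g ⊕ Fin g)) (X : (ZMod ℓ)[X]) =
          diagonal fun _ => (X : (ZMod ℓ)[X]) := by
        ext i j
        by_cases h : i = j <;> simp [Matrix.scalar_apply, diagonal_apply, h]
      rw [hsc, diagonal_sub, det_diagonal]
    rw [hcp]
    exact Polynomial.Splits.prod fun i _ => Polynomial.Splits.X_sub_C _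
  · -- roots nonzero
    intro x hx hx0
    subst hx0
    have hev : Polynomial.eval 0 (diagonal v).charpoly = 0 :=
      Polynomial.isRoot_of_mem_roots hx
    have hdet : (diagonal v).det = 0 := by
      rw [Matrix.det_eq_sign_charpoly_coeff, Polynomial.coeff_zero_eq_eval_zero, hev, mul_zero]
    rw [det_diagonal] at hdet
    exact (Finset.prod_ne_zero_iff.mpr fun i _ => hv0 i) hdet
  · -- trace
    rw [Matrix.trace_diagonal]
    rw [Fintype.sum_sum_type]
    simp only [hv, Sum.elim_inl, Sum.elim_inr, Finset.sum_const, Finset.card_univ,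
      Fintype.card_fin, nsmul_eq_mul]
    rw [← mul_add, hsum, hs]
    rw [← mul_assoc, mul_comm ((g : ZMod ℓ)) (-(t : ZMod ℓ)), mul_assoc,
      mul_inv_cancel₀ hg0, mul_one]
end
end

section
/- For M₁ ∈ U_{2g}(F_ℓ) and M₂ ∈ B_{2g}(F_ℓ) with trace(M₂) = -t mod ℓ, the product M₁M₂ lies in B_{2g}(F_ℓ) and has trace equal to -t mod ℓ. -/
open Matrix Polynomial

noncomputable section

lemma triDiagMul {g : ℕ} {R : Type*} [CommRing R] (X Y : Matrix (Fin g) (Fin g) R)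
    (hX : X.BlockTriangular id) (hY : Y.BlockTriangular id) (i : Fin g) :
    (X * Y) i i = X i i * Y i i := by
  rw [Matrix.mul_apply]
  apply Finset.sum_eq_single
  · intro k _ hk
    rcases lt_or_gt_of_ne hk with h | h
    · rw [hX h, zero_mul]
    · rw [hY h, mul_zero]
  · intro h; simp at h

lemma traceFB {g : ℕ} {R : Type*} [CommRing R] (A B C D : Matrix (Fin g) (Fin g) R) :
    Matrix.trace (fromBlocks A B C D) = Matrix.trace A + Matrix.trace D := by
  simp [Matrix.trace, Matrix.diag, Fintype.sum_sum_type, fromBlocks]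

/-- For `M₁ ∈ U_{2g}(F_ℓ)` and `M₂ ∈ B_{2g}(F_ℓ)` with `trace M₂ = -t mod ℓ`,
the product `M₁M₂` lies in `B_{2g}(F_ℓ)` and has trace `-t mod ℓ`. -/
theorem stmt11 (ℓ g : ℕ) [Fact ℓ.Prime] (hg : 1 ≤ g) (t : ℤ)
    (M₁ M₂ : Matrix (Fin g ⊕ Fin g) (Fin g ⊕ Fin g) (ZMod ℓ))
    (h₁ : M₁ ∈ USet ℓ g) (h₂ : M₂ ∈ BSet ℓ g)
    (htr : Matrix.trace M₂ = -(t : ZMod ℓ)) :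
    M₁ * M₂ ∈ BSet ℓ g ∧ Matrix.trace (M₁ * M₂) = -(t : ZMod ℓ) := by
  obtain ⟨A₁, S₁, hA₁tri, hA₁diag, hS₁, rfl⟩ := h₁
  obtain ⟨A₂, S₂, μ, hA₂tri, hA₂u, hS₂, rfl⟩ := h₂
  have hA₁u : IsUnit A₁ := by
    rw [Matrix.isUnit_iff_isUnit_det, Matrix.det_of_upperTriangular hA₁tri]
    simp [hA₁diag]
  have hA₁d : IsUnit A₁.det := (Matrix.isUnit_iff_isUnit_det A₁).mp hA₁u
  have hA₂d : IsUnit A₂.det := (Matrix.isUnit_iff_isUnit_det A₂).mp hA₂u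
  haveI := A₁.invertibleOfIsUnitDet hA₁d
  haveI := A₂.invertibleOfIsUnitDet hA₂d
  have hA₁itri : A₁⁻¹.BlockTriangular id := Matrix.blockTriangular_inv_of_blockTriangular hA₁tri
  have hA₂itri : A₂⁻¹.BlockTriangular id := Matrix.blockTriangular_inv_of_blockTriangular hA₂tri
  have hA₁idiag : ∀ i, A₁⁻¹ i i = 1 := by
    intro i
    have h := triDiagMul A₁⁻¹ A₁ hA₁itri hA₁tri i
    rw [Matrix.nonsing_inv_mul _ hA₁d, hA₁diag i, mul_one] at h
    simpa using h.symm
  have hμ0 : (μ : ZMod ℓ) ≠ 0 := μ.ne_zero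
  have hμ : ((μ : ZMod ℓ))⁻¹ * ((μ : ZMod ℓ)) ^ 2 = (μ : ZMod ℓ) := by
    field_simp
  set S' : Matrix (Fin g) (Fin g) (ZMod ℓ) :=
    S₂ + ((μ : ZMod ℓ) ^ 2) • (A₂⁻¹ * S₁ * (A₂⁻¹)ᵀ) with hS'def
  have e2 : A₁ * (((μ : ZMod ℓ))⁻¹ • (A₂ * S₂)) + A₁ * S₁ * ((μ : ZMod ℓ) • (A₂ᵀ)⁻¹)
      = ((μ : ZMod ℓ))⁻¹ • (A₁ * A₂ * S') := by
    rw [hS'def, mul_add, smul_add, Matrix.mul_smul, Matrix.mul_smul]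
    congr 1
    · rw [Matrix.mul_assoc]
    · rw [Matrix.mul_smul, smul_smul, hμ]
      congr 1
      rw [Matrix.transpose_nonsing_inv,
        show A₁ * A₂ * (A₂⁻¹ * S₁ * (A₂ᵀ)⁻¹) = A₁ * (A₂ * A₂⁻¹) * S₁ * (A₂ᵀ)⁻¹ by
          simp only [Matrix.mul_assoc],
        Matrix.mul_nonsing_inv _ hA₂d, Matrix.mul_one, Matrix.mul_assoc]
  have e4 : (A₁ᵀ)⁻¹ * ((μ : ZMod ℓ) • (A₂ᵀ)⁻¹) = (μ : ZMod ℓ) • ((A₁ * A₂)ᵀ)⁻¹ := by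
    rw [Matrix.transpose_mul, Matrix.mul_inv_rev, Matrix.mul_smul]
  have hEq : fromBlocks A₁ (A₁ * S₁) 0 (A₁ᵀ)⁻¹ *
      fromBlocks A₂ (((μ : ZMod ℓ))⁻¹ • (A₂ * S₂)) 0 ((μ : ZMod ℓ) • (A₂ᵀ)⁻¹) =
      fromBlocks (A₁ * A₂) (((μ : ZMod ℓ))⁻¹ • ((A₁ * A₂) * S'))
        0 ((μ : ZMod ℓ) • ((A₁ * A₂)ᵀ)⁻¹) := by
    rw [Matrix.fromBlocks_multiply]
    simp only [Matrix.zero_mul, Matrix.mul_zero, add_zero, zero_add, e2, e4]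
  have htrA : Matrix.trace (A₁ * A₂) = Matrix.trace A₂ := by
    simp only [Matrix.trace, Matrix.diag]
    apply Finset.sum_congr rfl
    intro i _
    rw [triDiagMul _ _ hA₁tri hA₂tri, hA₁diag, one_mul]
  have htrB : Matrix.trace ((A₁ * A₂)ᵀ)⁻¹ = Matrix.trace (A₂ᵀ)⁻¹ := by
    rw [← Matrix.transpose_nonsing_inv, Matrix.trace_transpose,
      ← Matrix.transpose_nonsing_inv, Matrix.trace_transpose,
      Matrix.mul_inv_rev, Matrix.trace_mul_comm]
    simp only [Matrix.trace, Matrix.diag]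
    apply Finset.sum_congr rfl
    intro i _
    rw [triDiagMul _ _ hA₁itri hA₂itri, hA₁idiag, one_mul]
  rw [traceFB, Matrix.trace_smul, smul_eq_mul] at htr
  constructor
  · exact ⟨A₁ * A₂, S', μ, hA₁tri.mul hA₂tri, hA₁u.mul hA₂u, by
      simp only [hS'def, Matrix.IsSymm, Matrix.transpose_add, Matrix.transpose_smul,
        Matrix.transpose_mul, Matrix.transpose_transpose, hS₁.eq, hS₂.eq, Matrix.mul_assoc],
      hEq⟩
  · rw [hEq, traceFB, Matrix.trace_smul, smul_eq_mul, htrA, htrB, htr]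
end
end

section
/- For M₁ ∈ U'_{2g}(F_ℓ) and M₂ ∈ B_{2g}(F_ℓ) with trace(M₂) = 0, the product M₁M₂ lies in B_{2g}(F_ℓ) and has trace 0. -/
open Matrix Polynomial

noncomputable section

section aux
variable {K : Type*} [Field K] {n : ℕ}

lemma trace_fromBlocks' {g : ℕ} (A B C D : Matrix (Fin g) (Fin g) K) :
    (fromBlocks A B C D).trace = A.trace + D.trace := by
  simp [Matrix.trace, Fintype.sum_sum_type]

lemma trace_mul_tri (B C : Matrix (Fin n) (Fin n) K)
    (hB : B.BlockTriangular id) (hC : C.BlockTriangular id) :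
    (B * C).trace = ∑ i, B i i * C i i := by
  simp only [Matrix.trace, Matrix.diag, Matrix.mul_apply]
  refine Finset.sum_congr rfl fun i _ => ?_
  refine Finset.sum_eq_single i (fun j _ hji => ?_)
    (fun h => absurd (Finset.mem_univ i) h)
  rcases lt_or_gt_of_ne hji with h | h
  · rw [hB (show (id j : Fin n) < id i from h), zero_mul]
  · rw [hC (show (id i : Fin n) < id j from h), mul_zero]

lemma diag_inv_tri (A : Matrix (Fin n) (Fin n) K) (hT : A.BlockTriangular id)
    (hdet : IsUnit A.det) (i : Fin n) : A⁻¹ i i = (A i i)⁻¹ := by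
  haveI := A.invertibleOfIsUnitDet hdet
  have hT' := Matrix.blockTriangular_inv_of_blockTriangular hT
  have h2 : ∑ j, A i j * A⁻¹ j i = 1 := by
    rw [← Matrix.mul_apply, A.mul_nonsing_inv hdet]; simp
  have hz : ∀ j ∈ Finset.univ, j ≠ i → A i j * A⁻¹ j i = 0 := by
    intro j _ hji
    rcases lt_or_gt_of_ne hji with h | h
    · rw [hT (show (id j : Fin n) < id i from h), zero_mul]
    · rw [hT' (show (id i : Fin n) < id j from h), mul_zero]
  rw [Finset.sum_eq_single_of_mem i (Finset.mem_univ i) hz] at h2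
  exact (inv_eq_of_mul_eq_one_right h2).symm

end aux


set_option linter.unusedVariables false in
set_option linter.unnecessarySeqFocus false in
/-- For `M₁ ∈ U'_{2g}(F_ℓ)` and `M₂ ∈ B_{2g}(F_ℓ)` with `trace M₂ = 0`,
the product `M₁M₂` lies in `B_{2g}(F_ℓ)` and has trace `0`. -/
theorem stmt12 (ℓ g : ℕ) [Fact ℓ.Prime] (hg : 1 ≤ g)
    (M₁ M₂ : Matrix (Fin g ⊕ Fin g) (Fin g ⊕ Fin g) (ZMod ℓ))
    (h₁ : M₁ ∈ U'Set ℓ g) (h₂ : M₂ ∈ BSet ℓ g)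
    (htr : Matrix.trace M₂ = 0) :
    M₁ * M₂ ∈ BSet ℓ g ∧ Matrix.trace (M₁ * M₂) = 0 := by
  obtain ⟨A₁, S₁, lam, hT1, hd1, hS1, rfl⟩ := h₁
  obtain ⟨A₂, S₂, μ, hT2, hU2, hS2, rfl⟩ := h₂
  set a : ZMod ℓ := (lam : ZMod ℓ)
  set b : ZMod ℓ := (μ : ZMod ℓ)
  have hdet1 : IsUnit A₁.det := by
    rw [det_of_upperTriangular hT1]
    simp only [hd1, Finset.prod_const, Finset.card_fin]
    exact lam.isUnit.pow g
  have hdet2 : IsUnit A₂.det := (isUnit_iff_isUnit_det A₂).mp hU2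
  haveI := A₁.invertibleOfIsUnitDet hdet1
  haveI := A₂.invertibleOfIsUnitDet hdet2
  have hI1 : A₁⁻¹.BlockTriangular id := Matrix.blockTriangular_inv_of_blockTriangular hT1
  have hI2 : A₂⁻¹.BlockTriangular id := Matrix.blockTriangular_inv_of_blockTriangular hT2
  have ha0 : a ≠ 0 := lam.ne_zero
  have hb0 : b ≠ 0 := μ.ne_zero
  have hA2inv : A₂ * A₂⁻¹ = 1 := A₂.mul_nonsing_inv hdet2
  have key : A₁ * A₂ * A₂⁻¹ = A₁ := by rw [mul_assoc, hA2inv, mul_one]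
  set S : Matrix (Fin g) (Fin g) (ZMod ℓ) :=
    (a ^ 2) • S₂ + (b ^ 2) • (A₂⁻¹ * S₁ * (A₂ᵀ)⁻¹) with hS
  have hSsym : S.IsSymm := by
    rw [Matrix.IsSymm, hS, transpose_add, transpose_smul, transpose_smul, hS2.eq,
      transpose_mul, transpose_mul, ← transpose_nonsing_inv, transpose_transpose,
      transpose_nonsing_inv, hS1.eq, mul_assoc]
  have hTR : A₁ * (b⁻¹ • (A₂ * S₂)) + ((a ^ 2)⁻¹ • (A₁ * S₁)) * (b • (A₂ᵀ)⁻¹)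
      = (a ^ 2 * b)⁻¹ • (A₁ * A₂ * S) := by
    simp only [hS, mul_add, Matrix.mul_smul, Matrix.smul_mul, smul_smul, smul_add,
      ← mul_assoc, key]
    match_scalars <;> field_simp <;> ring
  have hBR : ((a ^ 2) • (A₁ᵀ)⁻¹) * (b • (A₂ᵀ)⁻¹) = (a ^ 2 * b) • ((A₁ * A₂)ᵀ)⁻¹ := by
    rw [transpose_mul, Matrix.mul_inv_rev, Matrix.smul_mul, Matrix.mul_smul, smul_smul]
  have hprod : (fromBlocks A₁ ((a ^ 2)⁻¹ • (A₁ * S₁)) 0 ((a ^ 2) • (A₁ᵀ)⁻¹)) *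
      (fromBlocks A₂ (b⁻¹ • (A₂ * S₂)) 0 (b • (A₂ᵀ)⁻¹))
      = fromBlocks (A₁ * A₂) ((a ^ 2 * b)⁻¹ • ((A₁ * A₂) * S)) 0
        ((a ^ 2 * b) • ((A₁ * A₂)ᵀ)⁻¹) := by
    rw [fromBlocks_multiply]
    refine Matrix.fromBlocks_inj.mpr ⟨by simp, ?_, by simp, by simpa using hBR⟩
    simpa using hTR
  -- trace facts
  have hdiag1 : ∀ i, A₁⁻¹ i i = a⁻¹ := fun i => by
    rw [diag_inv_tri A₁ hT1 hdet1 i, hd1 i]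
  have hdiag2 : ∀ i, A₂⁻¹ i i = (A₂ i i)⁻¹ := diag_inv_tri A₂ hT2 hdet2
  have e1 : (A₁ * A₂).trace = a * A₂.trace := by
    rw [trace_mul_tri _ _ hT1 hT2]
    simp [hd1, Matrix.trace, Matrix.diag, Finset.mul_sum]
  have e2 : A₂⁻¹.trace = ∑ i, (A₂ i i)⁻¹ := by
    simp [Matrix.trace, Matrix.diag, hdiag2]
  have e3 : (((A₁ * A₂)ᵀ)⁻¹).trace = a⁻¹ * A₂⁻¹.trace := by
    rw [← transpose_nonsing_inv, trace_transpose, Matrix.mul_inv_rev,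
      trace_mul_tri _ _ hI2 hI1, e2, Finset.mul_sum]
    exact Finset.sum_congr rfl fun i _ => by rw [hdiag1, hdiag2, mul_comm]
  have etr : (fromBlocks A₁ ((a ^ 2)⁻¹ • (A₁ * S₁)) 0 ((a ^ 2) • (A₁ᵀ)⁻¹) *
      fromBlocks A₂ (b⁻¹ • (A₂ * S₂)) 0 (b • (A₂ᵀ)⁻¹)).trace
      = a * (A₂.trace + b * A₂⁻¹.trace) := by
    rw [hprod, trace_fromBlocks', trace_smul, e1, e3, smul_eq_mul]
    field_simp
  have htr2 : A₂.trace + b * A₂⁻¹.trace = 0 := by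
    rw [trace_fromBlocks', ← transpose_nonsing_inv, trace_smul, trace_transpose,
      smul_eq_mul] at htr
    exact htr
  have hc : ((lam ^ 2 * μ : (ZMod ℓ)ˣ) : ZMod ℓ) = a ^ 2 * b := by push_cast; ring
  constructor
  · exact ⟨A₁ * A₂, S, lam ^ 2 * μ, hT1.mul hT2,
      ((isUnit_iff_isUnit_det A₁).mpr hdet1).mul hU2, hSsym, by rw [hc]; exact hprod⟩
  · rw [etr, htr2, mul_zero]
end
end

section
/- The number of conjugacy classes of PGSp_{2g}(F_ℓ) is at most (2g/(ℓ-1)) times the number of conjugacy classes of GSp_{2g}(F_ℓ). More precisely, every Λ_{2g}(F_ℓ)-orbit on the set of conjugacy classes of GSp_{2g}(F_ℓ) under scalar multiplication has size at least (ℓ-1)/(2g). -/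
open Matrix Polynomial

noncomputable section

/-- The conjugacy class of `M` in `GSp_{2g}(F_ℓ)`. -/
def conjClass (ℓ g : ℕ) (M : Matrix (Fin g ⊕ Fin g) (Fin g ⊕ Fin g) (ZMod ℓ)) :
    Set (Matrix (Fin g ⊕ Fin g) (Fin g ⊕ Fin g) (ZMod ℓ)) :=
  {X | ∃ N ∈ GSpSet ℓ g, X = N * M * N⁻¹}

/-- The set of conjugacy classes of `GSp_{2g}(F_ℓ)`. -/
def GSpClasses (ℓ g : ℕ) :
    Set (Set (Matrix (Fin g ⊕ Fin g) (Fin g ⊕ Fin g) (ZMod ℓ))) :=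
  {C | ∃ M ∈ GSpSet ℓ g, C = conjClass ℓ g M}

/-- The orbit of a conjugacy class `C` of `GSp_{2g}(F_ℓ)` under the action of
the scalar matrices `Λ_{2g}(F_ℓ) ≃ F_ℓˣ` by `b • C = {bM : M ∈ C}`. -/
def lambdaOrbit (ℓ g : ℕ)
    (C : Set (Matrix (Fin g ⊕ Fin g) (Fin g ⊕ Fin g) (ZMod ℓ))) :
    Set (Set (Matrix (Fin g ⊕ Fin g) (Fin g ⊕ Fin g) (ZMod ℓ))) :=
  {C' | ∃ b : (ZMod ℓ)ˣ, C' = (fun X => (b : ZMod ℓ) • X) '' C}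

/-- The conjugacy classes of `PGSp_{2g}(F_ℓ)`, viewed (as in the paper) as the
`Λ_{2g}(F_ℓ)`-orbits of conjugacy classes of `GSp_{2g}(F_ℓ)`. -/
def PGSpClasses (ℓ g : ℕ) :
    Set (Set (Set (Matrix (Fin g ⊕ Fin g) (Fin g ⊕ Fin g) (ZMod ℓ)))) :=
  {O | ∃ C ∈ GSpClasses ℓ g, O = lambdaOrbit ℓ g C}

namespace Stmt14Aux

abbrev Mat (ℓ g : ℕ) := Matrix (Fin g ⊕ Fin g) (Fin g ⊕ Fin g) (ZMod ℓ)

variable (ℓ g : ℕ)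

def smulSet (b : (ZMod ℓ)ˣ) (C : Set (Mat ℓ g)) : Set (Mat ℓ g) :=
  (fun X => (b : ZMod ℓ) • X) '' C

lemma smulSet_comp (b b' : (ZMod ℓ)ˣ) (C : Set (Mat ℓ g)) :
    smulSet ℓ g b (smulSet ℓ g b' C) = smulSet ℓ g (b * b') C := by
  unfold smulSet
  simp only [Set.image_image, smul_smul, Units.val_mul]

lemma smulSet_one (C : Set (Mat ℓ g)) : smulSet ℓ g 1 C = C := by
  unfold smulSet
  simp

lemma one_mem_GSp : (1 : Mat ℓ g) ∈ GSpSet ℓ g := by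
  refine ⟨isUnit_one, 1, ?_⟩
  simp

lemma smul_mem_GSp (b : (ZMod ℓ)ˣ) {M : Mat ℓ g} (hM : M ∈ GSpSet ℓ g) :
    (b : ZMod ℓ) • M ∈ GSpSet ℓ g := by
  obtain ⟨hMu, μ, hμ⟩ := hM
  refine ⟨?_, b ^ 2 * μ, ?_⟩
  · rw [Matrix.isUnit_iff_isUnit_det, Matrix.det_smul]
    exact ((b.isUnit.pow _)).mul ((Matrix.isUnit_iff_isUnit_det M).mp hMu)
  · rw [Matrix.transpose_smul, Matrix.smul_mul, Matrix.mul_smul, Matrix.smul_mul,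
      smul_smul, hμ, smul_smul]
    congr 1
    push_cast
    ring

lemma smulSet_conjClass (b : (ZMod ℓ)ˣ) (M : Mat ℓ g) :
    smulSet ℓ g b (conjClass ℓ g M) = conjClass ℓ g ((b : ZMod ℓ) • M) := by
  ext X
  constructor
  · rintro ⟨Y, ⟨N, hN, rfl⟩, rfl⟩
    exact ⟨N, hN, by rw [Matrix.mul_smul, Matrix.smul_mul]⟩
  · rintro ⟨N, hN, rfl⟩
    exact ⟨N * M * N⁻¹, ⟨N, hN, rfl⟩, by rw [Matrix.mul_smul, Matrix.smul_mul]⟩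

lemma lambdaOrbit_smulSet (b : (ZMod ℓ)ˣ) (C : Set (Mat ℓ g)) :
    lambdaOrbit ℓ g (smulSet ℓ g b C) = lambdaOrbit ℓ g C := by
  ext C'
  constructor
  · rintro ⟨b', rfl⟩
    refine ⟨b' * b, ?_⟩
    show smulSet ℓ g b' (smulSet ℓ g b C) = smulSet ℓ g (b' * b) C
    exact smulSet_comp ℓ g b' b C
  · rintro ⟨b', rfl⟩
    refine ⟨b' * b⁻¹, ?_⟩
    show smulSet ℓ g b' C = smulSet ℓ g (b' * b⁻¹) (smulSet ℓ g b C)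
    rw [smulSet_comp]
    congr 1
    group

lemma mem_self_conjClass (M : Mat ℓ g) : M ∈ conjClass ℓ g M :=
  ⟨1, one_mem_GSp ℓ g, by rw [one_mul, inv_one, mul_one]⟩

lemma stab_pow_eq_one [Fact ℓ.Prime] (hg : 1 ≤ g) {M : Mat ℓ g} (hM : M ∈ GSpSet ℓ g)
    {b : (ZMod ℓ)ˣ} (hb : smulSet ℓ g b (conjClass ℓ g M) = conjClass ℓ g M) :
    (b : ZMod ℓ) ^ (2 * g) = 1 := by
  have hmem : (b : ZMod ℓ) • M ∈ conjClass ℓ g M := by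
    rw [← hb]
    exact ⟨M, mem_self_conjClass ℓ g M, rfl⟩
  obtain ⟨N, ⟨hNu, -⟩, hEq⟩ := hmem
  have hdet := congrArg Matrix.det hEq
  rw [Matrix.det_smul, Matrix.det_conj hNu] at hdet
  have hcard : Fintype.card (Fin g ⊕ Fin g) = 2 * g := by
    simp [Fintype.card_sum, two_mul]
  rw [hcard] at hdet
  have hMd : M.det ≠ 0 :=
    ((Matrix.isUnit_iff_isUnit_det M).mp hM.1).ne_zero
  exact mul_right_cancel₀ hMd (hdet.trans (one_mul M.det).symm)

lemma orbit_lower [Fact ℓ.Prime] (hg : 1 ≤ g) {M : Mat ℓ g} (hM : M ∈ GSpSet ℓ g) :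
    ℓ - 1 ≤ 2 * g * (lambdaOrbit ℓ g (conjClass ℓ g M)).ncard := by
  classical
  set C := conjClass ℓ g M with hC
  set f : (ZMod ℓ)ˣ → Set (Mat ℓ g) := fun b => smulSet ℓ g b C with hf
  have himg : lambdaOrbit ℓ g C = ↑(Finset.univ.image f) := by
    ext C'
    simp only [Finset.coe_image, Finset.coe_univ, Set.image_univ, Set.mem_range]
    constructor
    · rintro ⟨b, rfl⟩; exact ⟨b, rfl⟩
    · rintro ⟨b, rfl⟩; exact ⟨b, rfl⟩
  have hfiber : ∀ a ∈ Finset.univ.image f,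
      (Finset.univ.filter fun x => f x = a).card ≤ 2 * g := by
    intro a ha
    obtain ⟨b₀, -, hb₀⟩ := Finset.mem_image.mp ha
    have h2g : 0 < 2 * g := by omega
    have hsub : ∀ b ∈ Finset.univ.filter (fun x => f x = a),
        ((b₀⁻¹ * b : (ZMod ℓ)ˣ) : ZMod ℓ) ∈
          (Polynomial.nthRoots (2 * g) (1 : ZMod ℓ)).toFinset := by
      intro b hb
      simp only [Finset.mem_filter, Finset.mem_univ, true_and] at hb
      have hfb : smulSet ℓ g b C = smulSet ℓ g b₀ C := by
        rw [show smulSet ℓ g b C = f b from rfl, show smulSet ℓ g b₀ C = f b₀ from rfl,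
          hb, hb₀]
      have hstab : smulSet ℓ g (b₀⁻¹ * b) C = C := by
        rw [← smulSet_comp, hfb, smulSet_comp, inv_mul_cancel, smulSet_one]
      rw [Multiset.mem_toFinset, Polynomial.mem_nthRoots h2g]
      exact stab_pow_eq_one ℓ g hg hM hstab
    have hinj : Set.InjOn (fun b : (ZMod ℓ)ˣ => ((b₀⁻¹ * b : (ZMod ℓ)ˣ) : ZMod ℓ))
        ↑(Finset.univ.filter (fun x => f x = a)) := by
      intro b₁ _ b₂ _ h
      have : b₀⁻¹ * b₁ = b₀⁻¹ * b₂ := Units.ext h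
      exact mul_left_cancel this
    exact le_trans (Finset.card_le_card_of_injOn _ hsub hinj)
      (le_trans (Multiset.toFinset_card_le _) (Polynomial.card_nthRoots _ _))
  have hmain := Finset.card_le_mul_card_image (f := f) Finset.univ (2 * g) hfiber
  rw [Finset.card_univ, ZMod.card_units] at hmain
  rwa [himg, Set.ncard_coe_finset]

end Stmt14Aux

open Stmt14Aux

/-- The number of conjugacy classes of `PGSp_{2g}(F_ℓ)` is at most
`2g/(ℓ-1)` times the number of conjugacy classes of `GSp_{2g}(F_ℓ)` (stated in
multiplied form), and more precisely every `Λ_{2g}(F_ℓ)`-orbit on the set of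
conjugacy classes of `GSp_{2g}(F_ℓ)` has size at least `(ℓ-1)/(2g)`. -/
theorem stmt14 (ℓ g : ℕ) [Fact ℓ.Prime] (hg : 1 ≤ g) :
    (ℓ - 1) * (PGSpClasses ℓ g).ncard ≤ (2 * g) * (GSpClasses ℓ g).ncard ∧
    ∀ C ∈ GSpClasses ℓ g, ℓ - 1 ≤ (2 * g) * (lambdaOrbit ℓ g C).ncard := by
  classical
  have part2 : ∀ C ∈ GSpClasses ℓ g, ℓ - 1 ≤ (2 * g) * (lambdaOrbit ℓ g C).ncard := by
    rintro C ⟨M, hM, rfl⟩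
    exact orbit_lower ℓ g hg hM
  refine ⟨?_, part2⟩
  have hsubGSp : ∀ O ∈ PGSpClasses ℓ g, O ⊆ GSpClasses ℓ g := by
    rintro O ⟨C, ⟨M, hM, rfl⟩, rfl⟩ D ⟨b, rfl⟩
    refine ⟨(b : ZMod ℓ) • M, smul_mem_GSp ℓ g b hM, ?_⟩
    show smulSet ℓ g b (conjClass ℓ g M) = conjClass ℓ g ((b : ZMod ℓ) • M)
    exact smulSet_conjClass ℓ g b M
  have hdisj : ∀ O₁ ∈ PGSpClasses ℓ g, ∀ O₂ ∈ PGSpClasses ℓ g,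
      O₁ ≠ O₂ → Disjoint O₁ O₂ := by
    rintro O₁ ⟨C₁, -, rfl⟩ O₂ ⟨C₂, -, rfl⟩ hne
    rw [Set.disjoint_left]
    rintro D ⟨b₁, rfl⟩ ⟨b₂, hD⟩
    apply hne
    have h1 : smulSet ℓ g b₁ C₁ = smulSet ℓ g b₂ C₂ := hD
    have h2 : C₂ = smulSet ℓ g (b₂⁻¹ * b₁) C₁ := by
      rw [← smulSet_comp, h1, smulSet_comp, inv_mul_cancel, smulSet_one]
    rw [h2, lambdaOrbit_smulSet]
  have hPfin : (PGSpClasses ℓ g).Finite := Set.toFinite _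
  set P : Finset (Set (Set (Mat ℓ g))) := hPfin.toFinset with hP
  have hPcard : (PGSpClasses ℓ g).ncard = P.card :=
    Set.ncard_eq_toFinset_card _ hPfin
  have hkey : ∀ O ∈ P, ℓ - 1 ≤ 2 * g * O.ncard := by
    intro O hO
    rw [hP, Set.Finite.mem_toFinset] at hO
    obtain ⟨C, hC, rfl⟩ := hO
    exact part2 C hC
  have hsum : ∑ O ∈ P, O.ncard ≤ (GSpClasses ℓ g).ncard := by
    have hdisj' : ∀ O₁ ∈ P, ∀ O₂ ∈ P, O₁ ≠ O₂ →
        Disjoint ((Set.toFinite O₁).toFinset) ((Set.toFinite O₂).toFinset) := by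
      intro O₁ h₁ O₂ h₂ hne
      rw [hP, Set.Finite.mem_toFinset] at h₁ h₂
      rw [Finset.disjoint_left]
      intro D hD₁ hD₂
      rw [Set.Finite.mem_toFinset] at hD₁ hD₂
      exact Set.disjoint_left.mp (hdisj O₁ h₁ O₂ h₂ hne) hD₁ hD₂
    calc ∑ O ∈ P, O.ncard
        = ∑ O ∈ P, ((Set.toFinite O).toFinset).card := by
          refine Finset.sum_congr rfl fun O _ => ?_
          exact Set.ncard_eq_toFinset_card _ _
      _ = (P.biUnion fun O => (Set.toFinite O).toFinset).card :=
          (Finset.card_biUnion hdisj').symm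
      _ ≤ ((Set.toFinite (GSpClasses ℓ g)).toFinset).card := by
          apply Finset.card_le_card
          intro D hD
          rw [Finset.mem_biUnion] at hD
          obtain ⟨O, hO, hDO⟩ := hD
          rw [Set.Finite.mem_toFinset] at hDO ⊢
          rw [hP, Set.Finite.mem_toFinset] at hO
          exact hsubGSp O hO hDO
      _ = (GSpClasses ℓ g).ncard := (Set.ncard_eq_toFinset_card _ _).symm
  calc (ℓ - 1) * (PGSpClasses ℓ g).ncard
      = ∑ _O ∈ P, (ℓ - 1) := by
        rw [hPcard, Finset.sum_const, smul_eq_mul, mul_comm]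
    _ ≤ ∑ O ∈ P, 2 * g * O.ncard := Finset.sum_le_sum hkey
    _ = 2 * g * ∑ O ∈ P, O.ncard := by rw [Finset.mul_sum]
    _ ≤ 2 * g * (GSpClasses ℓ g).ncard := Nat.mul_le_mul_left _ hsum
end
end
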